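/- Let c₁, …, c_{d+1} be d+1 affinely independent points in ℝ^d, let r₁, …, r_{d+1} ∈ ℝ, and let 1 ≤ k ≤ d. Then the system of equations ⟨ω, c_i⟩ + b₁ = −r_i for i = 1, …, k and ⟨ω, c_i⟩ + b₂ = r_i for i = k+1, …, d+1, together with the constraint ‖ω‖ = 1, has at most two solutions (ω, b₁, b₂) ∈ ℝ^d × ℝ × ℝ. -/

import Mathlib

open scoped RealInnerProductSpace

lemma inner_ext_aux {d : ℕ} (hd : 0 < d) (e : Fin d → EuclideanSpace ℝ (Fin d))
    (he : LinearIndependent ℝ e) (x : EuclideanSpace ℝ (Fin d))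
    (hx : ∀ i, ⟪x, e i⟫ = 0) : x = 0 := by
  have : Nonempty (Fin d) := ⟨⟨0, hd⟩⟩
  have hcard : Fintype.card (Fin d) = Module.finrank ℝ (EuclideanSpace ℝ (Fin d)) := by
    simp [finrank_euclideanSpace_fin]
  let b := basisOfLinearIndependentOfCardEqFinrank he hcard
  have hb : ∀ i, b i = e i := fun i => by
    simp [b, coe_basisOfLinearIndependentOfCardEqFinrank]
  have hxx : ⟪x, x⟫ = 0 := by
    have h1 : ⟪x, ∑ i, b.repr x i • b i⟫ = 0 := by
      rw [inner_sum]
      simp [inner_smul_right, hb, hx]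
    rwa [b.sum_repr x] at h1
  exact inner_self_eq_zero.mp hxx

lemma exists_inner_eq_aux {d : ℕ} (hd : 0 < d) (e : Fin d → EuclideanSpace ℝ (Fin d))
    (he : LinearIndependent ℝ e) (w : Fin d → ℝ) :
    ∃ v, ∀ i, ⟪v, e i⟫ = w i := by
  let T : EuclideanSpace ℝ (Fin d) →ₗ[ℝ] (Fin d → ℝ) :=
    LinearMap.pi (fun i => (innerSL ℝ (e i)).toLinearMap)
  have hT : ∀ x i, T x i = ⟪x, e i⟫ := fun x i => real_inner_comm x (e i)
  have hinj : Function.Injective T := by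
    rw [← LinearMap.ker_eq_bot, LinearMap.ker_eq_bot']
    intro m hm
    exact inner_ext_aux hd e he m (fun i => by rw [← hT m i, hm]; rfl)
  have hsurj : Function.Surjective T :=
    (LinearMap.injective_iff_surjective_of_finrank_eq_finrank
      (by simp [finrank_euclideanSpace_fin])).mp hinj
  obtain ⟨v, hv⟩ := hsurj w
  exact ⟨v, fun i => by rw [← hT, hv]⟩

theorem stmt_15 (d k : ℕ) (hk₁ : 1 ≤ k) (hk₂ : k ≤ d)
    (c : Fin (d + 1) → EuclideanSpace ℝ (Fin d)) (hc : AffineIndependent ℝ c)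
    (r : Fin (d + 1) → ℝ) :
    ∃ s₁ s₂ : EuclideanSpace ℝ (Fin d) × ℝ × ℝ,
      {s : EuclideanSpace ℝ (Fin d) × ℝ × ℝ |
        ‖s.1‖ = 1 ∧
        (∀ i : Fin (d + 1), (i : ℕ) < k → ⟪s.1, c i⟫ + s.2.1 = -(r i)) ∧
        (∀ i : Fin (d + 1), k ≤ (i : ℕ) → ⟪s.1, c i⟫ + s.2.2 = r i)} ⊆ {s₁, s₂} := by
  classical
  have hd : 0 < d := lt_of_lt_of_le hk₁ hk₂
  rcases Set.eq_empty_or_nonempty {s : EuclideanSpace ℝ (Fin d) × ℝ × ℝ |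
      ‖s.1‖ = 1 ∧
      (∀ i : Fin (d + 1), (i : ℕ) < k → ⟪s.1, c i⟫ + s.2.1 = -(r i)) ∧
      (∀ i : Fin (d + 1), k ≤ (i : ℕ) → ⟪s.1, c i⟫ + s.2.2 = r i)} with hS | hS
  · exact ⟨(0, 0, 0), (0, 0, 0), by rw [hS]; exact Set.empty_subset _⟩
  obtain ⟨⟨ω₁, a₁, a₂⟩, hω₁, h1, h2⟩ := hS
  -- build the direction vector v
  set e : Fin d → EuclideanSpace ℝ (Fin d) := fun i => c i.succ - c 0 with he_def
  have he : LinearIndependent ℝ e := by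
    have h := (affineIndependent_iff_linearIndependent_vsub ℝ c 0).mp hc
    have hinjf : Function.Injective
        (fun i : Fin d => (⟨i.succ, Fin.succ_ne_zero i⟩ : {x : Fin (d + 1) // x ≠ 0})) := by
      intro a b hab
      have := congrArg Subtype.val hab
      simpa [Fin.succ_inj] using this
    have hcomp := h.comp _ hinjf
    simpa [he_def, Function.comp_def] using hcomp
  obtain ⟨v, hv⟩ := exists_inner_eq_aux hd e he
    (fun i => if k ≤ (i : ℕ) + 1 then 1 else 0)
  have hvne : v ≠ 0 := by
    intro h0
    have hj := hv ⟨k - 1, by omega⟩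
    have hval : ((⟨k - 1, by omega⟩ : Fin d) : ℕ) = k - 1 := rfl
    rw [h0, hval] at hj
    simp only [inner_zero_left] at hj
    rw [if_pos (by omega)] at hj
    norm_num at hj
  have hvsq : ‖v‖ ^ 2 ≠ 0 := pow_ne_zero _ (norm_ne_zero_iff.mpr hvne)
  set t₀ : ℝ := -(2 * ⟪ω₁, v⟫) / ‖v‖ ^ 2 with ht₀
  have hck : k < d + 1 := by omega
  set g : ℝ → EuclideanSpace ℝ (Fin d) × ℝ × ℝ := fun t =>
    (ω₁ + t • v, -(r 0) - ⟪ω₁ + t • v, c 0⟫,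
      r ⟨k, hck⟩ - ⟪ω₁ + t • v, c ⟨k, hck⟩⟫) with hg
  refine ⟨g 0, g t₀, ?_⟩
  rintro ⟨ω, b₁, b₂⟩ ⟨hω, hb1, hb2⟩
  set τ : ℝ := (b₁ - a₁) - (b₂ - a₂) with hτdef
  have h0k : ((0 : Fin (d + 1)) : ℕ) < k := by simp; omega
  have hω0 : ⟪ω, c 0⟫ + b₁ = -(r 0) := hb1 0 h0k
  have hω₁0 : ⟪ω₁, c 0⟫ + a₁ = -(r 0) := h1 0 h0k
  have hδ : ω - ω₁ = τ • v := by
    have hz : ω - ω₁ - τ • v = 0 := by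
      refine inner_ext_aux hd e he _ (fun i => ?_)
      rw [inner_sub_left, inner_sub_left, real_inner_smul_left, hv i]
      simp only [he_def, inner_sub_right]
      by_cases hik : k ≤ (i : ℕ) + 1
      · have hA : ⟪ω, c i.succ⟫ + b₂ = r i.succ :=
          hb2 i.succ (by rw [Fin.val_succ]; omega)
        have hB : ⟪ω₁, c i.succ⟫ + a₂ = r i.succ :=
          h2 i.succ (by rw [Fin.val_succ]; omega)
        rw [if_pos hik]
        linarith
      · have hA : ⟪ω, c i.succ⟫ + b₁ = -(r i.succ) :=
          hb1 i.succ (by rw [Fin.val_succ]; omega)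
        have hB : ⟪ω₁, c i.succ⟫ + a₁ = -(r i.succ) :=
          h1 i.succ (by rw [Fin.val_succ]; omega)
        rw [if_neg hik]
        linarith
    exact sub_eq_zero.mp hz
  have hωeq : ω = ω₁ + τ • v := by
    have h' := sub_eq_iff_eq_add.mp hδ
    rw [h', add_comm]
  have hτ : τ = 0 ∨ τ = t₀ := by
    have hn2 : ‖ω₁ + τ • v‖ ^ 2 = 1 := by rw [← hωeq, hω]; norm_num
    rw [norm_add_sq_real, real_inner_smul_right, norm_smul, mul_pow, hω₁,
      Real.norm_eq_abs, sq_abs] at hn2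
    have hfac : τ * (2 * ⟪ω₁, v⟫ + τ * ‖v‖ ^ 2) = 0 := by linear_combination hn2
    rcases mul_eq_zero.mp hfac with h | h
    · exact Or.inl h
    · refine Or.inr ?_
      rw [ht₀, eq_div_iff hvsq]
      linarith
  have hbck : ⟪ω, c ⟨k, hck⟩⟫ + b₂ = r ⟨k, hck⟩ := hb2 ⟨k, hck⟩ (le_refl k)
  have hgτ : ((ω, b₁, b₂) : EuclideanSpace ℝ (Fin d) × ℝ × ℝ) = g τ := by
    simp only [hg]
    rw [← hωeq]
    simp only [Prod.mk.injEq]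
    exact ⟨trivial, by linarith, by linarith⟩
  rcases hτ with h | h
  · exact Or.inl (by rw [hgτ, h])
  · exact Or.inr (by rw [hgτ, h]; exact rfl)
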